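/- Let N, M be positive integers with N ≥ 2M. Let T : ℝ^N → ℂ^M be real analytic with T(θ) ≠ 0 for every θ, and suppose there exists θ₀ ∈ ℝ^N such that the real Fréchet derivative of T at θ₀ is surjective as an ℝ-linear map ℝ^N → ℂ^M. Then for Lebesgue-almost every θ ∈ ℝ^N, the real Fréchet derivative of the normalized map T̊(θ) = T(θ)/‖T(θ)‖, viewed as an ℝ-linear map ℝ^N → ℂ^M ≅ ℝ^{2M}, has rank exactly 2M − 1; that is, its range has real dimension 2M − 1. -/

import Mathlib

open MeasureTheory Filter Topology Set

lemma countable_zero_analytic (f : ℝ → ℝ) (hf : ∀ t, AnalyticAt ℝ f t)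
    (h : ∃ t, f t ≠ 0) : {t | f t = 0}.Countable := by
  obtain ⟨t₀, ht₀⟩ := h
  set Z := {t | f t = 0} with hZ
  have hiso : ∀ z ∈ Z, ∀ᶠ t in 𝓝[≠] z, f t ≠ 0 := by
    intro z hz
    rcases (hf z).eventually_eq_zero_or_eventually_ne_zero with h0 | h1
    · exact absurd (AnalyticOnNhd.eqOn_zero_of_preconnected_of_eventuallyEq_zero
        (fun t _ => hf t) isPreconnected_univ (Set.mem_univ z) h0 (Set.mem_univ t₀)) ht₀
    · exact h1
  have hdisc : DiscreteTopology Z := by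
    rw [discreteTopology_subtype_iff]
    intro x hx
    have h1 : {t | f t ≠ 0} ∈ 𝓝[≠] x ⊓ 𝓟 Z := by
      exact Filter.mem_inf_of_left (hiso x hx)
    have h2 : Z ∈ 𝓝[≠] x ⊓ 𝓟 Z := Filter.mem_inf_of_right (Filter.mem_principal_self Z)
    rw [← Filter.empty_mem_iff_bot]
    have : {t | f t ≠ 0} ∩ Z = ∅ := by
      ext t
      simp only [Set.mem_inter_iff, Set.mem_empty_iff_false, iff_false]
      rintro ⟨ht1, ht2⟩
      exact ht1 ht2
    exact this ▸ Filter.inter_mem h1 h2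
  have : Countable Z := countable_of_Lindelof_of_discrete
  exact Set.countable_coe_iff.mp this

lemma ae_ne_zero_analytic_pi : ∀ (n : ℕ) (f : (Fin n → ℝ) → ℝ), (∀ x, AnalyticAt ℝ f x) →
    (∃ x, f x ≠ 0) → ∀ᵐ x ∂(volume : Measure (Fin n → ℝ)), f x ≠ 0 := by
  intro n
  induction n with
  | zero =>
    intro f _ ⟨x₀, hx₀⟩
    haveI : Subsingleton (Fin 0 → ℝ) := ⟨fun a b => funext fun i => i.elim0⟩
    exact Filter.Eventually.of_forall fun x => (Subsingleton.elim x x₀) ▸ hx₀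
  | succ n ih =>
    intro f hf ⟨x₀, hx₀⟩
    -- the measurable equivalence with ℝ × (Fin n → ℝ)
    set e := MeasurableEquiv.piFinSuccAbove (fun _ : Fin (n + 1) => ℝ) 0 with he
    have hmp : MeasurePreserving e (volume : Measure (Fin (n+1) → ℝ))
        ((volume : Measure ℝ).prod (volume : Measure (Fin n → ℝ))) := by
      have := measurePreserving_piFinSuccAbove (fun _ : Fin (n+1) => (volume : Measure ℝ)) 0
      exact this
    -- the underlying linear structure
    set L : (ℝ × (Fin n → ℝ)) →L[ℝ] (Fin (n + 1) → ℝ) :=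
      ContinuousLinearMap.pi (fun j => Fin.cases (ContinuousLinearMap.fst ℝ ℝ (Fin n → ℝ))
        (fun k => (ContinuousLinearMap.proj k).comp (ContinuousLinearMap.snd ℝ ℝ (Fin n → ℝ))) j)
      with hL
    have hLapp : ∀ p : ℝ × (Fin n → ℝ), L p = Fin.cons p.1 p.2 := by
      intro p
      funext j
      induction j using Fin.cases with
      | zero => simp [hL]
      | succ k => simp [hL]
    have hesymm : ∀ p : ℝ × (Fin n → ℝ), e.symm p = Fin.cons p.1 p.2 := by
      intro p
      show (Fin.insertNthEquiv (fun _ => ℝ) 0).symm.symm p = _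
      simp [Fin.insertNthEquiv, Fin.insertNth_zero]
    set F : (ℝ × (Fin n → ℝ)) → ℝ := fun p => f (e.symm p) with hF
    have hFanal : ∀ p, AnalyticAt ℝ F p := by
      intro p
      have : F = f ∘ L := by
        funext q
        simp [hF, hesymm, hLapp]
      rw [this]
      exact (hf _).comp (L.analyticAt p)
    have hFcont : Continuous F := continuous_iff_continuousAt.mpr fun p => (hFanal p).continuousAt
    have hFne : ∃ p, F p ≠ 0 := by
      refine ⟨e x₀, ?_⟩
      simpa [hF] using hx₀
    obtain ⟨p₀, hp₀⟩ := hFne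
    -- the zero set
    set s : Set (ℝ × (Fin n → ℝ)) := {p | F p = 0} with hs
    have hsm : MeasurableSet s := (isClosed_eq hFcont continuous_const).measurableSet
    -- B : the set of bad slices
    set B : Set (Fin n → ℝ) := {y | ∀ t, F (t, y) = 0} with hB
    have hBnull : (volume : Measure (Fin n → ℝ)) B = 0 := by
      have hganal : ∀ y, AnalyticAt ℝ (fun y' => F (p₀.1, y')) y := by
        intro y
        exact (hFanal (p₀.1, y)).curry_right
      have := ih (fun y' => F (p₀.1, y')) hganal ⟨p₀.2, by simpa using hp₀⟩
      have hnull : (volume : Measure (Fin n → ℝ)) {y | F (p₀.1, y) = 0} = 0 := by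
        simpa [ae_iff] using this
      refine measure_mono_null ?_ hnull
      intro y hy
      exact hy p₀.1
    -- Fubini
    have hkey : ((volume : Measure ℝ).prod (volume : Measure (Fin n → ℝ))) s = 0 := by
      have hswap : ((volume : Measure ℝ).prod (volume : Measure (Fin n → ℝ))) s
          = ((volume : Measure (Fin n → ℝ)).prod (volume : Measure ℝ)) (Prod.swap ⁻¹' s) := by
        rw [← MeasureTheory.Measure.prod_swap, Measure.map_apply measurable_swap hsm]
      rw [hswap]
      rw [Measure.measure_prod_null (measurable_swap hsm)]
      have hae : ∀ᵐ y ∂(volume : Measure (Fin n → ℝ)), y ∉ B :=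
        (measure_eq_zero_iff_ae_notMem (μ := volume)).mp hBnull
      filter_upwards [hae] with y hy
      obtain ⟨t₁, ht₁⟩ : ∃ t, F (t, y) ≠ 0 := by
        by_contra hcon
        push_neg at hcon
        exact hy (fun t => hcon t)
      have hcnt : {t : ℝ | F (t, y) = 0}.Countable := by
        refine countable_zero_analytic (fun t => F (t, y)) (fun t => ?_) ⟨t₁, ht₁⟩
        exact (hFanal (t, y)).curry_left
      refine measure_mono_null ?_ (hcnt.measure_zero volume)
      intro t ht
      exact ht
    have : (volume : Measure (Fin (n+1) → ℝ)) {x | f x = 0} = 0 := by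
      have hpre : e ⁻¹' s = {x | f x = 0} := by
        ext x
        simp [hs, hF]
      rw [← hpre]
      rw [hmp.measure_preimage hsm.nullMeasurableSet]
      exact hkey
    simpa [ae_iff] using this

lemma ae_ne_zero_analytic_euclidean (n : ℕ) (φ : EuclideanSpace ℝ (Fin n) → ℝ)
    (hφ : ∀ x, AnalyticAt ℝ φ x) (hne : ∃ x, φ x ≠ 0) :
    ∀ᵐ θ ∂(volume : Measure (EuclideanSpace ℝ (Fin n))), φ θ ≠ 0 := by
  obtain ⟨x₀, hx₀⟩ := hne
  set e := (MeasurableEquiv.toLp 2 (Fin n → ℝ)).symm with he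
  have hmp : MeasurePreserving e volume volume :=
    EuclideanSpace.volume_preserving_symm_measurableEquiv_toLp (Fin n)
  set L := (EuclideanSpace.equiv (Fin n) ℝ : EuclideanSpace ℝ (Fin n) ≃L[ℝ] (Fin n → ℝ)) with hLdef
  have hcoe : ∀ x : EuclideanSpace ℝ (Fin n), e x = L x := fun _ => rfl
  have hsymm : ∀ y : Fin n → ℝ, L.symm y = e.symm y := fun _ => rfl
  set f : (Fin n → ℝ) → ℝ := fun y => φ (L.symm y) with hf
  have hfanal : ∀ y, AnalyticAt ℝ f y := by
    intro y
    exact (hφ _).comp ((L.symm : (Fin n → ℝ) →L[ℝ] EuclideanSpace ℝ (Fin n)).analyticAt y)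
  have hfne : ∃ y, f y ≠ 0 := ⟨L x₀, by simpa [hf] using hx₀⟩
  have hae := ae_ne_zero_analytic_pi n f hfanal hfne
  have hnull : (volume : Measure (Fin n → ℝ)) {y | f y = 0} = 0 := by
    simpa [ae_iff] using hae
  have hφcont : Continuous φ := continuous_iff_continuousAt.mpr fun x => (hφ x).continuousAt
  have hfm : MeasurableSet {y : Fin n → ℝ | f y = 0} :=
    (isClosed_eq (hφcont.comp L.symm.continuous) continuous_const).measurableSet
  have hpre : e ⁻¹' {y | f y = 0} = {x | φ x = 0} := by
    ext x
    simp [hf, hcoe]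
  have : (volume : Measure (EuclideanSpace ℝ (Fin n))) {x | φ x = 0} = 0 := by
    rw [← hpre, hmp.measure_preimage hfm.nullMeasurableSet]
    exact hnull
  simpa [ae_iff] using this

open MeasureTheory Filter Topology Set
open scoped RealInnerProductSpace

section Wrappers

variable {E F : Type*} [NormedAddCommGroup E] [InnerProductSpace ℝ E]
  [NormedAddCommGroup F] [InnerProductSpace ℝ F] [CompleteSpace E] [CompleteSpace F]

/-- The adjoint as a real continuous linear map. -/
noncomputable def adjL : (E →L[ℝ] F) →L[ℝ] (F →L[ℝ] E) :=
  LinearMap.mkContinuous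
    { toFun := ContinuousLinearMap.adjoint
      map_add' := fun a b => by simp [map_add]
      map_smul' := fun c a => by
        simp [LinearIsometryEquiv.map_smulₛₗ] }
    1 (fun a => by simp)

@[simp] lemma adjL_apply (A : E →L[ℝ] F) : adjL A = ContinuousLinearMap.adjoint A := rfl

/-- The real inner product as a continuous linear map into the dual. -/
noncomputable def innerRL : F →L[ℝ] (F →L[ℝ] ℝ) :=
  LinearMap.mkContinuous
    { toFun := fun x => innerSL ℝ x
      map_add' := fun a b => by simp [map_add]
      map_smul' := fun c a => by simp }
    1 (fun a => by simp [innerSL_apply_norm])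

@[simp] lemma innerRL_apply (x y : F) : innerRL x y = ⟪x, y⟫ := rfl

end Wrappers

lemma analyticAt_matrix_det {X : Type*} [NormedAddCommGroup X] [NormedSpace ℝ X]
    {d : ℕ} (m : X → Matrix (Fin d) (Fin d) ℝ) (θ : X)
    (hm : ∀ i j, AnalyticAt ℝ (fun x => m x i j) θ) :
    AnalyticAt ℝ (fun x => (m x).det) θ := by
  simp_rw [Matrix.det_apply]
  apply Finset.analyticAt_fun_sum
  intro σ _
  have hprod : AnalyticAt ℝ (fun x => ∏ i, m x (σ i) i) θ :=
    Finset.analyticAt_fun_prod _ (fun i _ => hm _ _)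
  have := (analyticAt_const (v := ((Equiv.Perm.sign σ : ℤ) : ℝ)) (x := θ)).mul hprod
  simpa [Units.smul_def, zsmul_eq_mul, Pi.mul_def] using this

section DetFun

variable {E F : Type*} [NormedAddCommGroup E] [InnerProductSpace ℝ E]
  [NormedAddCommGroup F] [InnerProductSpace ℝ F]
  [FiniteDimensional ℝ E] [FiniteDimensional ℝ F]

/-- The endomorphism `A A* + x ⟪x, ·⟫` of `F`. -/
noncomputable def bigL (A : E →L[ℝ] F) (x : F) : F →L[ℝ] F :=
  A.comp (adjL A) + (ContinuousLinearMap.smulRightL ℝ F F (innerRL x)) x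

lemma bigL_apply (A : E →L[ℝ] F) (x v : F) :
    bigL A x v = A (ContinuousLinearMap.adjoint A v) + ⟪x, v⟫ • x := rfl

lemma ker_bigL (A : E →L[ℝ] F) (x : F) :
    LinearMap.ker (bigL A x : F →ₗ[ℝ] F) = (LinearMap.range (A : E →ₗ[ℝ] F) ⊔ (ℝ ∙ x))ᗮ := by
  ext v
  simp only [LinearMap.mem_ker, Submodule.mem_orthogonal, ContinuousLinearMap.coe_coe]
  constructor
  · intro hv
    have h0 : (0:ℝ) = ⟪ContinuousLinearMap.adjoint A v, ContinuousLinearMap.adjoint A v⟫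
        + ⟪x, v⟫ * ⟪x, v⟫ := by
      calc (0:ℝ) = ⟪v, bigL A x v⟫ := by rw [hv]; simp
        _ = ⟪ContinuousLinearMap.adjoint A v, ContinuousLinearMap.adjoint A v⟫
            + ⟪x, v⟫ * ⟪x, v⟫ := by
          rw [bigL_apply, inner_add_right, real_inner_smul_right,
            ← ContinuousLinearMap.adjoint_inner_left, real_inner_comm v x]
    have h1 : ⟪ContinuousLinearMap.adjoint A v, ContinuousLinearMap.adjoint A v⟫ = 0 ∧
        ⟪x, v⟫ * ⟪x, v⟫ = 0 := by
      constructor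
      · nlinarith [real_inner_self_nonneg (x := ContinuousLinearMap.adjoint A v),
          mul_self_nonneg (⟪x, v⟫ : ℝ)]
      · nlinarith [real_inner_self_nonneg (x := ContinuousLinearMap.adjoint A v),
          mul_self_nonneg (⟪x, v⟫ : ℝ)]
    have hadj : ContinuousLinearMap.adjoint A v = 0 := by
      rw [← @inner_self_eq_zero ℝ]; exact h1.1
    have hxv : ⟪x, v⟫ = 0 := by
      have := h1.2
      nlinarith [this]
    intro u hu
    rcases Submodule.mem_sup.mp hu with ⟨a, ha, b, hb, rfl⟩
    rcases LinearMap.mem_range.mp ha with ⟨w, rfl⟩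
    rcases Submodule.mem_span_singleton.mp hb with ⟨c, rfl⟩
    rw [inner_add_left, real_inner_smul_left]
    have : ⟪A w, v⟫ = ⟪w, ContinuousLinearMap.adjoint A v⟫ := by
      rw [← ContinuousLinearMap.adjoint_inner_right]
    rw [ContinuousLinearMap.coe_coe, this, hadj, inner_zero_right, hxv]
    ring
  · intro hv
    have hadj : ContinuousLinearMap.adjoint A v = 0 := by
      rw [← @inner_self_eq_zero ℝ]
      rw [ContinuousLinearMap.adjoint_inner_left]
      have : A (ContinuousLinearMap.adjoint A v) ∈ LinearMap.range (A : E →ₗ[ℝ] F) ⊔ (ℝ ∙ x) :=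
        Submodule.mem_sup_left (LinearMap.mem_range_self _ _)
      rw [real_inner_comm]
      exact hv _ this
    have hxv : ⟪x, v⟫ = 0 := by
      exact hv x (Submodule.mem_sup_right (Submodule.mem_span_singleton_self x))
    rw [bigL_apply, hadj, hxv]
    simp

lemma det_ne_zero_iff_ker_eq_bot (f : F →ₗ[ℝ] F) :
    LinearMap.det f ≠ 0 ↔ LinearMap.ker f = ⊥ := by
  constructor
  · intro hdet
    have := (LinearMap.equivOfDetNeZero f hdet).injective
    have hcoe : ⇑(LinearMap.equivOfDetNeZero f hdet) = ⇑f := by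
      ext v
      simp [LinearMap.equivOfDetNeZero, LinearEquiv.ofIsUnitDet]
    rw [hcoe] at this
    exact LinearMap.ker_eq_bot.mpr this
  · intro hker
    exact isUnit_iff_ne_zero.mp
      (LinearMap.isUnit_det f ((LinearMap.isUnit_iff_ker_eq_bot f).mpr hker))

lemma det_bigL_ne_zero_iff [CompleteSpace F] (A : E →L[ℝ] F) (x : F) :
    LinearMap.det ((bigL A x : F →L[ℝ] F) : F →ₗ[ℝ] F) ≠ 0 ↔
      LinearMap.range (A : E →ₗ[ℝ] F) ⊔ (ℝ ∙ x) = ⊤ := by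
  rw [det_ne_zero_iff_ker_eq_bot (f := ((bigL A x : F →L[ℝ] F) : F →ₗ[ℝ] F))]
  have hker : LinearMap.ker ((bigL A x : F →L[ℝ] F) : F →ₗ[ℝ] F)
      = (LinearMap.range (A : E →ₗ[ℝ] F) ⊔ (ℝ ∙ x))ᗮ := ker_bigL A x
  rw [hker]
  exact Submodule.orthogonal_eq_bot_iff

end DetFun

section DetAnalytic

variable {E F X : Type*} [NormedAddCommGroup E] [InnerProductSpace ℝ E]
  [NormedAddCommGroup F] [InnerProductSpace ℝ F]
  [FiniteDimensional ℝ E] [FiniteDimensional ℝ F]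
  [NormedAddCommGroup X] [NormedSpace ℝ X]

lemma analyticAt_det_bigL {f : X → (E →L[ℝ] F)} {g : X → F} {θ : X}
    (hf : AnalyticAt ℝ f θ) (hg : AnalyticAt ℝ g θ) :
    AnalyticAt ℝ (fun t => LinearMap.det ((bigL (f t) (g t) : F →L[ℝ] F) : F →ₗ[ℝ] F)) θ := by
  classical
  have hbigL : AnalyticAt ℝ (fun t => (bigL (f t) (g t) : F →L[ℝ] F)) θ := by
    have h1 : AnalyticAt ℝ (fun t => (f t).comp (adjL (f t))) θ := by
      have hadj : AnalyticAt ℝ (fun t => adjL (f t)) θ :=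
        ((adjL : (E →L[ℝ] F) →L[ℝ] (F →L[ℝ] E)).analyticAt _).comp hf
      exact ((ContinuousLinearMap.compL ℝ F E F).analyticAt_bilinear _).comp₂ hf hadj
    have h2 : AnalyticAt ℝ
        (fun t => (ContinuousLinearMap.smulRightL ℝ F F (innerRL (g t))) (g t)) θ := by
      have hinner : AnalyticAt ℝ (fun t => innerRL (g t) : X → (F →L[ℝ] ℝ)) θ :=
        ((innerRL : F →L[ℝ] (F →L[ℝ] ℝ)).analyticAt _).comp hg
      exact ((ContinuousLinearMap.smulRightL ℝ F F).analyticAt_bilinear _).comp₂ hinner hg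
    exact h1.add h2
  set b := stdOrthonormalBasis ℝ F with hb
  have hdim : ∀ t, LinearMap.det ((bigL (f t) (g t) : F →L[ℝ] F) : F →ₗ[ℝ] F)
      = Matrix.det (Matrix.of fun i j =>
          ⟪b i, (bigL (f t) (g t)) (b j)⟫) := by
    intro t
    rw [← LinearMap.det_toMatrix b.toBasis]
    congr 1
    ext i j
    rw [LinearMap.toMatrix_apply]
    simp [OrthonormalBasis.coe_toBasis, OrthonormalBasis.coe_toBasis_repr_apply,
      OrthonormalBasis.repr_apply_apply, real_inner_comm]
  simp_rw [hdim]
  apply analyticAt_matrix_det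
  intro i j
  have happ : AnalyticAt ℝ (fun t => (bigL (f t) (g t)) (b j)) θ :=
    ((ContinuousLinearMap.apply ℝ F (b j)).analyticAt _).comp hbigL
  have := ((innerRL (b i) : F →L[ℝ] ℝ).analyticAt _).comp happ
  exact this

end DetAnalytic

section Rank

variable {E F : Type*} [NormedAddCommGroup E] [InnerProductSpace ℝ E]
  [NormedAddCommGroup F] [InnerProductSpace ℝ F]
  [FiniteDimensional ℝ E] [FiniteDimensional ℝ F]

lemma finrank_range_fderiv_normalized (T : E → F)
    (hd : ∀ θ', DifferentiableAt ℝ T θ') (hne : ∀ θ', T θ' ≠ 0) (θ : E)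
    (hsup : LinearMap.range (fderiv ℝ T θ : E →ₗ[ℝ] F) ⊔ (ℝ ∙ (T θ)) = ⊤) :
    Module.finrank ℝ (LinearMap.range (fderiv ℝ (fun θ' => ‖T θ'‖⁻¹ • T θ') θ : E →ₗ[ℝ] F))
      = Module.finrank ℝ F - 1 := by
  classical
  set g : E → F := fun θ' => ‖T θ'‖⁻¹ • T θ' with hg
  have hnormne : ∀ θ', ‖T θ'‖ ≠ 0 := fun θ' => norm_ne_zero_iff.mpr (hne θ')
  have hcd : ∀ θ', DifferentiableAt ℝ (fun t => ‖T t‖⁻¹) θ' := fun θ' =>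
    ((hd θ').norm ℝ (hne θ')).inv (hnormne θ')
  have hgd : ∀ θ', DifferentiableAt ℝ g θ' := fun θ' => (hcd θ').smul (hd θ')
  have hfd : fderiv ℝ g θ
      = ‖T θ‖⁻¹ • fderiv ℝ T θ + (fderiv ℝ (fun t => ‖T t‖⁻¹) θ).smulRight (T θ) :=
    fderiv_smul (hcd θ) (hd θ)
  have hgnorm : ∀ θ', ‖g θ'‖ = 1 := by
    intro θ'
    rw [hg]
    simp only [norm_smul, norm_inv, norm_norm]
    exact inv_mul_cancel₀ (hnormne θ')
  -- (1) the range of the derivative is contained in the orthogonal complement of T θ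
  have hperp : ∀ v, ⟪g θ, fderiv ℝ g θ v⟫ = 0 := by
    intro v
    have hconst : (fun θ' => (⟪g θ', g θ'⟫ : ℝ)) = fun _ => (1:ℝ) := by
      funext θ'
      rw [real_inner_self_eq_norm_sq, hgnorm]
      norm_num
    have h0 : fderiv ℝ (fun θ' => (⟪g θ', g θ'⟫ : ℝ)) θ v = 0 := by
      rw [hconst, fderiv_fun_const]
      simp
    rw [fderiv_inner_apply ℝ (hgd θ) (hgd θ) v] at h0
    linarith [real_inner_comm (g θ) (fderiv ℝ g θ v), h0]
  have hspan : (ℝ ∙ (g θ)) = (ℝ ∙ (T θ)) := by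
    rw [hg]
    exact Submodule.span_singleton_smul_eq
      (isUnit_iff_ne_zero.mpr (inv_ne_zero (hnormne θ))) _
  have hrange_le : LinearMap.range (fderiv ℝ g θ : E →ₗ[ℝ] F) ≤ (ℝ ∙ (T θ))ᗮ := by
    rintro _ ⟨v, rfl⟩
    rw [← hspan]
    intro u hu
    rcases Submodule.mem_span_singleton.mp hu with ⟨c, rfl⟩
    rw [real_inner_smul_left, ContinuousLinearMap.coe_coe, hperp v]
    ring
  have hdim_perp : Module.finrank ℝ ((ℝ ∙ (T θ))ᗮ) = Module.finrank ℝ F - 1 := by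
    have h1 : Module.finrank ℝ (ℝ ∙ (T θ)) = 1 := finrank_span_singleton (hne θ)
    have := Submodule.finrank_add_finrank_orthogonal (K := (ℝ ∙ (T θ)))
    omega
  have hupper : Module.finrank ℝ (LinearMap.range (fderiv ℝ g θ : E →ₗ[ℝ] F))
      ≤ Module.finrank ℝ F - 1 := hdim_perp ▸ Submodule.finrank_mono hrange_le
  -- (2) lower bound
  have hTle : LinearMap.range (fderiv ℝ T θ : E →ₗ[ℝ] F)
      ≤ LinearMap.range (fderiv ℝ g θ : E →ₗ[ℝ] F) ⊔ (ℝ ∙ (T θ)) := by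
    rintro _ ⟨v, rfl⟩
    have hfv : fderiv ℝ T θ v = ‖T θ‖ • (fderiv ℝ g θ v)
        - (‖T θ‖ * (fderiv ℝ (fun t => ‖T t‖⁻¹) θ v)) • T θ := by
      have := congrArg (fun (A : E →L[ℝ] F) => A v) hfd
      simp only [ContinuousLinearMap.add_apply, ContinuousLinearMap.smul_apply,
        ContinuousLinearMap.smulRight_apply] at this
      rw [this]
      rw [smul_add, smul_smul, mul_inv_cancel₀ (hnormne θ), one_smul, mul_smul]
      abel
    rw [ContinuousLinearMap.coe_coe, hfv]
    refine Submodule.sub_mem _ ?_ ?_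
    · exact Submodule.mem_sup_left (Submodule.smul_mem _ _ (LinearMap.mem_range_self _ v))
    · exact Submodule.mem_sup_right (Submodule.smul_mem _ _ (Submodule.mem_span_singleton_self _))
  have hsup2 : LinearMap.range (fderiv ℝ g θ : E →ₗ[ℝ] F) ⊔ (ℝ ∙ (T θ)) = ⊤ := by
    rw [eq_top_iff, ← hsup]
    exact sup_le hTle le_sup_right
  have hlower : Module.finrank ℝ F ≤
      Module.finrank ℝ (LinearMap.range (fderiv ℝ g θ : E →ₗ[ℝ] F)) + 1 := by
    have h1 := Submodule.finrank_sup_add_finrank_inf_eq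
      (LinearMap.range (fderiv ℝ g θ : E →ₗ[ℝ] F)) (ℝ ∙ (T θ))
    rw [hsup2] at h1
    have h2 : Module.finrank ℝ (ℝ ∙ (T θ)) = 1 := finrank_span_singleton (hne θ)
    have h3 : Module.finrank ℝ (⊤ : Submodule ℝ F) = Module.finrank ℝ F := finrank_top ℝ F
    omega
  have hF1 : 1 ≤ Module.finrank ℝ F := by
    have := finrank_span_singleton (K := ℝ) (hne θ)
    have := Submodule.finrank_le (ℝ ∙ (T θ))
    omega
  omega

end Rank

/-- **Lemma 2 (the normalized map is a submersion onto the sphere almost everywhere).**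
Under the hypotheses of Theorem 1, for Lebesgue-almost every `θ` the real Fréchet derivative
of the normalized map `T̊(θ) = T(θ)/‖T(θ)‖` has rank exactly `2M − 1`. -/
theorem normalized_map_rank_ae (N M : ℕ) (hM : 0 < M) (hNM : 2 * M ≤ N)
    (T : EuclideanSpace ℝ (Fin N) → EuclideanSpace ℂ (Fin M))
    (hT_analytic : ∀ θ, AnalyticAt ℝ T θ)
    (hT_ne : ∀ θ, T θ ≠ 0)
    (θ₀ : EuclideanSpace ℝ (Fin N))
    (hsurj : Function.Surjective (fderiv ℝ T θ₀)) :
    ∀ᵐ θ ∂(volume : Measure (EuclideanSpace ℝ (Fin N))),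
      Module.finrank ℝ
        (LinearMap.range (fderiv ℝ (fun θ' => ‖T θ'‖⁻¹ • T θ') θ :
          EuclideanSpace ℝ (Fin N) →ₗ[ℝ] EuclideanSpace ℂ (Fin M))) = 2 * M - 1 := by
  classical
  have hdimF : Module.finrank ℝ (EuclideanSpace ℂ (Fin M)) = 2 * M := by
    have h := Module.finrank_mul_finrank ℝ ℂ (EuclideanSpace ℂ (Fin M))
    rw [finrank_euclideanSpace, Complex.finrank_real_complex] at h
    simpa [Fintype.card_fin, mul_comm] using h.symm
  have hA : ∀ θ, AnalyticAt ℝ (fderiv ℝ T) θ := fun θ => (hT_analytic θ).fderiv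
  set φ : EuclideanSpace ℝ (Fin N) → ℝ := fun θ =>
    LinearMap.det ((bigL (fderiv ℝ T θ) (T θ) :
      EuclideanSpace ℂ (Fin M) →L[ℝ] EuclideanSpace ℂ (Fin M)) :
      EuclideanSpace ℂ (Fin M) →ₗ[ℝ] EuclideanSpace ℂ (Fin M)) with hφ
  have hφanal : ∀ θ, AnalyticAt ℝ φ θ := fun θ => analyticAt_det_bigL (hA θ) (hT_analytic θ)
  have hφ0 : φ θ₀ ≠ 0 := by
    rw [hφ]
    simp only []
    rw [det_bigL_ne_zero_iff]
    rw [LinearMap.range_eq_top.mpr hsurj]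
    exact top_sup_eq _
  have hae := ae_ne_zero_analytic_euclidean N φ hφanal ⟨θ₀, hφ0⟩
  filter_upwards [hae] with θ hθ
  have hsup : LinearMap.range (fderiv ℝ T θ :
      EuclideanSpace ℝ (Fin N) →ₗ[ℝ] EuclideanSpace ℂ (Fin M)) ⊔ (ℝ ∙ (T θ)) = ⊤ :=
    (det_bigL_ne_zero_iff _ _).mp hθ
  have hres := finrank_range_fderiv_normalized T
    (fun θ' => (hT_analytic θ').differentiableAt) hT_ne θ hsup
  rw [hres, hdimF]
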